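/- Let W be a nonempty countable subset of the positive reals and L a finite set of labels with |L| ≥ 2. Model a string of the general run-length set ⟨W,L⟩ as a nonempty finite sequence of runs, i.e., pairs (ν, l) ∈ W × L, in which any two consecutive runs carry distinct labels; the weight of a string is the sum of its run-lengths. For every real s, the family (exp(−w(a)·s))_{a∈⟨W,L⟩} is summable if and only if (|L|−1)·G_W(s) < 1, where G_W(s) = Σ_{ν∈W} exp(−ν·s) ∈ [0,∞]. -/

import Mathlib

open scoped ENNReal NNReal

/-- A string of the general run-length set `⟨W,L⟩`: a nonempty finite sequence of runs
`(ν, l) ∈ W × L` in which any two consecutive runs carry distinct labels. -/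
def IsRLString {L : Type*} (W : Set ℝ) (a : List (ℝ × L)) : Prop :=
  a ≠ [] ∧ (∀ r ∈ a, r.1 ∈ W) ∧ a.Chain' fun p q => p.2 ≠ q.2

/-- The weight of a string: the sum of its run-lengths. -/
def rlWeight {L : Type*} (a : List (ℝ × L)) : ℝ :=
  (a.map Prod.fst).sum

/-- `G_W(s) = ∑_{ν ∈ W} exp(-ν·s)`, valued in `[0,∞]`. -/
noncomputable def GW (W : Set ℝ) (s : ℝ) : ℝ≥0∞ :=
  ∑' ν : W, ENNReal.ofReal (Real.exp (-(ν : ℝ) * s))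

namespace RunLengthAux

/-- `e s ν = exp(-ν s)` as an extended nonneg real. -/
noncomputable def e (s ν : ℝ) : ℝ≥0∞ := ENNReal.ofReal (Real.exp (-ν * s))

/-- The weight function of a string, in `ℝ≥0∞`. -/
noncomputable def F {L : Type*} (s : ℝ) (a : List (ℝ × L)) : ℝ≥0∞ :=
  ENNReal.ofReal (Real.exp (-rlWeight a * s))

lemma e_pos (s ν : ℝ) : 0 < e s ν := ENNReal.ofReal_pos.mpr (Real.exp_pos _)

lemma F_pos {L : Type*} (s : ℝ) (a : List (ℝ × L)) : 0 < F s a :=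
  ENNReal.ofReal_pos.mpr (Real.exp_pos _)

lemma rlWeight_cons {L : Type*} (r : ℝ × L) (a : List (ℝ × L)) :
    rlWeight (r :: a) = r.1 + rlWeight a := by
  simp [rlWeight]

lemma F_cons {L : Type*} (s : ℝ) (r : ℝ × L) (a : List (ℝ × L)) :
    F s (r :: a) = e s r.1 * F s a := by
  unfold F e
  rw [← ENNReal.ofReal_mul (Real.exp_nonneg _), ← Real.exp_add, rlWeight_cons]
  congr 2
  ring

lemma F_singleton {L : Type*} (s : ℝ) (r : ℝ × L) : F s [r] = e s r.1 := by
  unfold F e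
  congr 2
  simp [rlWeight]

open scoped Classical in
lemma GW_eq (W : Set ℝ) (s : ℝ) :
    GW W s = ∑' ν : ℝ, if ν ∈ W then e s ν else 0 := by
  rw [GW]
  have hfe : (fun ν : W => ENNReal.ofReal (Real.exp (-(ν : ℝ) * s))) = fun ν : W => e s ν := rfl
  rw [hfe, tsum_subtype W (fun ν => e s ν)]
  exact tsum_congr fun ν => by simp [Set.indicator_apply]

/-- Strings of length `n`. -/
def Strings (W : Set ℝ) (L : Type*) (n : ℕ) :=
  {a : List (ℝ × L) // IsRLString W a ∧ a.length = n}

instance (W : Set ℝ) (L : Type*) : IsEmpty (Strings W L 0) :=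
  ⟨fun b => b.2.1.1 (List.length_eq_zero_iff.mp b.2.2)⟩

/-- The head run of a string. -/
def hd {W : Set ℝ} {L : Type*} {n : ℕ} (b : Strings W L n) : ℝ × L :=
  b.1.head b.2.1.1

section

variable {L : Type*} [Fintype L] {W : Set ℝ} (s : ℝ)

open scoped Classical in
lemma S_one :
    (∑' b : Strings W L 1, F s b.1) = GW W s * (Fintype.card L : ℝ≥0∞) := by
  set g : ℝ × L → ℝ≥0∞ := fun r => if r.1 ∈ W then e s r.1 else 0 with hg
  have hinj : Function.Injective (fun b : Strings W L 1 => hd b) := by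
    intro b b' h
    obtain ⟨x, hx⟩ := List.length_eq_one_iff.mp b.2.2
    obtain ⟨y, hy⟩ := List.length_eq_one_iff.mp b'.2.2
    apply Subtype.ext
    rw [hx, hy]
    have hbx : hd b = x := by simp [hd, hx]
    have hby : hd b' = y := by simp [hd, hy]
    have h' : x = y := by rw [← hbx, ← hby]; exact h
    rw [h']
  have hsupp : Function.support g ⊆ Set.range (fun b : Strings W L 1 => hd b) := by
    intro r hr
    have hrW : r.1 ∈ W := by
      by_contra hc
      simp [hg, hc] at hr
    refine ⟨⟨[r], ⟨by simp, ?_, List.isChain_singleton _⟩, rfl⟩, rfl⟩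
    intro q hq
    simp at hq
    rw [hq]; exact hrW
  have hcomp : ∀ b : Strings W L 1, g (hd b) = F s b.1 := by
    intro b
    obtain ⟨x, hx⟩ := List.length_eq_one_iff.mp b.2.2
    have hbx : hd b = x := by simp [hd, hx]
    have hxW : x.1 ∈ W := b.2.1.2.1 x (by rw [hx]; simp)
    rw [hbx]
    show (if x.1 ∈ W then e s x.1 else 0) = F s b.1
    rw [if_pos hxW, hx, F_singleton]
  calc (∑' b : Strings W L 1, F s b.1)
      = ∑' b : Strings W L 1, g (hd b) := tsum_congr fun b => (hcomp b).symm
    _ = ∑' r : ℝ × L, g r := hinj.tsum_eq hsupp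
    _ = ∑' ν : ℝ, ∑' l : L, g (ν, l) := ENNReal.tsum_prod'
    _ = ∑' ν : ℝ, (if ν ∈ W then e s ν else 0) * (Fintype.card L : ℝ≥0∞) := by
        refine tsum_congr fun ν => ?_
        rw [tsum_fintype]
        simp [hg, Finset.sum_const, mul_comm]
    _ = GW W s * (Fintype.card L : ℝ≥0∞) := by
        rw [ENNReal.tsum_mul_right, GW_eq]

open scoped Classical in
lemma S_succ (n : ℕ) :
    (∑' b : Strings W L (n + 2), F s b.1)
      = GW W s * ((Fintype.card L - 1 : ℕ) : ℝ≥0∞)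
          * ∑' b : Strings W L (n + 1), F s b.1 := by
  -- the tail of a string of length `n+2`
  have tail_mk : ∀ b : Strings W L (n + 2), IsRLString W b.1.tail ∧ b.1.tail.length = n + 1 := by
    intro b
    have hlen : b.1.tail.length = n + 1 := by
      rw [List.length_tail, b.2.2]
      omega
    refine ⟨⟨?_, ?_, b.2.1.2.2.tail⟩, hlen⟩
    · intro hnil; rw [hnil] at hlen; simp at hlen
    · intro r hr; exact b.2.1.2.1 r (List.mem_of_mem_tail hr)
  set tl : Strings W L (n + 2) → Strings W L (n + 1) :=
    fun b => ⟨b.1.tail, tail_mk b⟩ with htl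
  set g : Strings W L (n + 1) × (ℝ × L) → ℝ≥0∞ :=
    fun p => (if p.2.1 ∈ W ∧ p.2.2 ≠ (hd p.1).2 then e s p.2.1 else 0) * F s p.1.1 with hg
  set φ : Strings W L (n + 2) → Strings W L (n + 1) × (ℝ × L) :=
    fun b => (tl b, hd b) with hφ
  have hcons : ∀ b : Strings W L (n + 2), hd b :: (tl b).1 = b.1 := fun b =>
    List.cons_head_tail b.2.1.1
  have hheadtl : ∀ b : Strings W L (n + 2),
      ((tl b).1.head?) = some (hd (tl b)) := fun b =>
    List.head?_eq_head (tl b).2.1.1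
  have hchain : ∀ b : Strings W L (n + 2), (hd b).2 ≠ (hd (tl b)).2 := by
    intro b
    have h := b.2.1.2.2
    rw [← hcons b, List.Chain', List.isChain_cons] at h
    exact h.1 _ (by rw [hheadtl b]; rfl)
  have hheadW : ∀ b : Strings W L (n + 2), (hd b).1 ∈ W := fun b =>
    b.2.1.2.1 _ (by rw [← hcons b]; exact List.mem_cons_self)
  have hcomp : ∀ b : Strings W L (n + 2), g (φ b) = F s b.1 := by
    intro b
    rw [hg]
    simp only [hφ]
    rw [if_pos ⟨hheadW b, hchain b⟩, ← F_cons, hcons b]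
  have hinj : Function.Injective φ := by
    intro b b' h
    rw [hφ] at h
    simp only [Prod.mk.injEq] at h
    apply Subtype.ext
    rw [← hcons b, ← hcons b', h.2, (Subtype.ext_iff.mp h.1 : (tl b).1 = (tl b').1)]
  have hsupp : Function.support g ⊆ Set.range φ := by
    intro p hp
    have hcond : p.2.1 ∈ W ∧ p.2.2 ≠ (hd p.1).2 := by
      by_contra hc
      simp only [Function.mem_support, hg, if_neg hc, zero_mul, ne_eq, not_true_eq_false] at hp
    have hstr : IsRLString W (p.2 :: p.1.1) ∧ (p.2 :: p.1.1).length = n + 2 := by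
      refine ⟨⟨by simp, ?_, ?_⟩, by simp [p.1.2.2]⟩
      · intro r hr
        rcases List.mem_cons.mp hr with h | h
        · rw [h]; exact hcond.1
        · exact p.1.2.1.2.1 r h
      · rw [List.Chain', List.isChain_cons]
        refine ⟨?_, p.1.2.1.2.2⟩
        intro y hy
        rw [List.head?_eq_head p.1.2.1.1] at hy
        have hy' : y = p.1.1.head p.1.2.1.1 := by simpa using hy.symm
        rw [hy']
        exact hcond.2
    refine ⟨⟨p.2 :: p.1.1, hstr⟩, ?_⟩
    rw [hφ]
    have h1 : tl ⟨p.2 :: p.1.1, hstr⟩ = p.1 := Subtype.ext (by simp [htl])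
    have h2 : hd ⟨p.2 :: p.1.1, hstr⟩ = p.2 := by simp [hd]
    simp only [h1, h2]
  calc (∑' b : Strings W L (n + 2), F s b.1)
      = ∑' b : Strings W L (n + 2), g (φ b) := tsum_congr fun b => (hcomp b).symm
    _ = ∑' p, g p := hinj.tsum_eq hsupp
    _ = ∑' a : Strings W L (n + 1), ∑' r : ℝ × L,
          (if r.1 ∈ W ∧ r.2 ≠ (hd a).2 then e s r.1 else 0) * F s a.1 :=
        ENNReal.tsum_prod'
    _ = ∑' a : Strings W L (n + 1),
          GW W s * ((Fintype.card L - 1 : ℕ) : ℝ≥0∞) * F s a.1 := by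
        refine tsum_congr fun a => ?_
        have hsplit : ∀ r : ℝ × L,
            (if r.1 ∈ W ∧ r.2 ≠ (hd a).2 then e s r.1 else 0) * F s a.1
              = (if r.1 ∈ W then e s r.1 else 0)
                * (if r.2 ≠ (hd a).2 then F s a.1 else 0) := by
          intro r
          by_cases h1 : r.1 ∈ W <;> by_cases h2 : r.2 ≠ (hd a).2 <;>
            simp [h1, h2]
        rw [tsum_congr hsplit, ENNReal.tsum_prod']
        have hinner : ∀ ν : ℝ,
            (∑' l : L, (if ν ∈ W then e s ν else 0)
                * (if l ≠ (hd a).2 then F s a.1 else 0))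
              = (if ν ∈ W then e s ν else 0)
                * (((Fintype.card L - 1 : ℕ) : ℝ≥0∞) * F s a.1) := by
          intro ν
          rw [ENNReal.tsum_mul_left]
          congr 1
          rw [tsum_fintype, ← Finset.sum_filter, Finset.sum_const,
            Finset.filter_ne' Finset.univ ((hd a).2),
            Finset.card_erase_of_mem (Finset.mem_univ _), Finset.card_univ,
            nsmul_eq_mul]
        rw [tsum_congr hinner, ENNReal.tsum_mul_right, ← GW_eq, mul_assoc]
    _ = GW W s * ((Fintype.card L - 1 : ℕ) : ℝ≥0∞)
          * ∑' b : Strings W L (n + 1), F s b.1 := ENNReal.tsum_mul_left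

lemma S_formula (n : ℕ) :
    (∑' b : Strings W L (n + 1), F s b.1)
      = GW W s * (Fintype.card L : ℝ≥0∞)
          * (GW W s * ((Fintype.card L - 1 : ℕ) : ℝ≥0∞)) ^ n := by
  induction n with
  | zero => simpa using S_one (L := L) (W := W) s
  | succ n ih =>
      rw [S_succ s n, ih]
      ring

end

end RunLengthAux

/-- The generating function of `⟨W,L⟩` converges at `s` if and only if
`(|L|-1)·G_W(s) < 1`. -/
theorem run_length_summable_iff
    {L : Type*} [Fintype L] (hL : 2 ≤ Fintype.card L)
    (W : Set ℝ) (hWne : W.Nonempty) (hWc : W.Countable) (hWpos : ∀ ν ∈ W, 0 < ν)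
    (s : ℝ) :
    (Summable fun a : {a : List (ℝ × L) // IsRLString W a} =>
        Real.exp (-rlWeight (a : List (ℝ × L)) * s)) ↔
      ((Fintype.card L : ℝ≥0∞) - 1) * GW W s < 1 := by
  classical
  open RunLengthAux in
  set c := Fintype.card L with hc
  set G := GW W s with hGdef
  set r : ℝ≥0∞ := ((c - 1 : ℕ) : ℝ≥0∞) * G with hr
  have hcast : ((c - 1 : ℕ) : ℝ≥0∞) = (c : ℝ≥0∞) - 1 := by
    rw [ENNReal.natCast_sub, Nat.cast_one]
  -- G is positive
  have hGpos : 0 < G := by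
    obtain ⟨ν0, hν0⟩ := hWne
    calc (0 : ℝ≥0∞) < ENNReal.ofReal (Real.exp (-(ν0 : ℝ) * s)) :=
          ENNReal.ofReal_pos.mpr (Real.exp_pos _)
      _ ≤ G := ENNReal.le_tsum (⟨ν0, hν0⟩ : W)
  -- sum over all strings equals sum over strings by length
  have hsigma :
      (∑' a : {a : List (ℝ × L) // IsRLString W a}, F s a.1)
        = ∑' n : ℕ, ∑' b : Strings W L n, F s b.1 := by
    set ψ : (Σ n : ℕ, Strings W L n) → {a : List (ℝ × L) // IsRLString W a} :=
      fun p => ⟨p.2.1, p.2.2.1⟩ with hψ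
    have hinj : Function.Injective ψ := by
      rintro ⟨n, b⟩ ⟨m, b'⟩ h
      have hlist : b.1 = b'.1 := congrArg Subtype.val h
      have hnm : n = m := by rw [← b.2.2, ← b'.2.2, hlist]
      subst hnm
      exact congrArg (Sigma.mk n) (Subtype.ext hlist)
    have hsupp : Function.support (fun a : {a : List (ℝ × L) // IsRLString W a} => F s a.1)
        ⊆ Set.range ψ := fun a _ => ⟨⟨a.1.length, ⟨a.1, a.2, rfl⟩⟩, rfl⟩
    rw [← hinj.tsum_eq hsupp, ENNReal.tsum_sigma']
  -- the total sum
  have htotal :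
      (∑' a : {a : List (ℝ × L) // IsRLString W a}, F s a.1)
        = G * (c : ℝ≥0∞) * (1 - r)⁻¹ := by
    rw [hsigma]
    have hzero : (∑' b : Strings W L 0, F s b.1) = 0 := tsum_empty
    have hshift : (∑' n : ℕ, ∑' b : Strings W L n, F s b.1)
        = ∑' n : ℕ, ∑' b : Strings W L (n + 1), F s b.1 := by
      refine (Function.Injective.tsum_eq Nat.succ_injective ?_).symm
      intro k hk
      match k with
      | 0 => exact absurd hzero hk
      | k + 1 => exact ⟨k, rfl⟩
    rw [hshift]
    calc (∑' n : ℕ, ∑' b : Strings W L (n + 1), F s b.1)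
        = ∑' n : ℕ, G * (c : ℝ≥0∞) * r ^ n := by
          refine tsum_congr fun n => ?_
          rw [S_formula s n]
          ring
      _ = G * (c : ℝ≥0∞) * (1 - r)⁻¹ := by
          rw [ENNReal.tsum_mul_left, ENNReal.tsum_geometric]
  -- summability in ℝ iff total sum finite
  have hsummable :
      (Summable fun a : {a : List (ℝ × L) // IsRLString W a} =>
          Real.exp (-rlWeight (a : List (ℝ × L)) * s))
        ↔ (∑' a : {a : List (ℝ × L) // IsRLString W a}, F s a.1) ≠ ⊤ := by
    have heq : (fun a : {a : List (ℝ × L) // IsRLString W a} => F s a.1)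
        = fun a => ((Real.toNNReal (Real.exp (-rlWeight a.1 * s)) : ℝ≥0) : ℝ≥0∞) :=
      funext fun a => rfl
    rw [heq, ENNReal.tsum_coe_ne_top_iff_summable, ← NNReal.summable_coe]
    exact summable_congr fun a => by
      rw [Real.coe_toNNReal _ (Real.exp_nonneg _)]
  rw [hsummable, htotal, ← hcast]
  constructor
  · intro h
    by_contra hge
    push_neg at hge
    have h1r : (1 : ℝ≥0∞) - r = 0 := tsub_eq_zero_of_le hge
    rw [h1r, ENNReal.inv_zero, ENNReal.mul_top (by
      refine mul_ne_zero hGpos.ne' ?_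
      exact_mod_cast (by omega : c ≠ 0))] at h
    exact h rfl
  · intro hlt
    have h1 : (1 : ℝ≥0∞) ≤ ((c - 1 : ℕ) : ℝ≥0∞) := by
      exact_mod_cast (by omega : 1 ≤ c - 1)
    have hGlt : G < 1 := lt_of_le_of_lt (by
      calc G = 1 * G := (one_mul G).symm
        _ ≤ ((c - 1 : ℕ) : ℝ≥0∞) * G := mul_le_mul_left h1 G) hlt
    refine ENNReal.mul_ne_top (ENNReal.mul_ne_top ?_ (ENNReal.natCast_ne_top c)) ?_
    · exact hGlt.ne_top
    · rw [ENNReal.inv_ne_top]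
      exact (tsub_pos_of_lt hlt).ne'
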